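/- arXiv:1008.0301 — 4 statements merged into one kernel-verified Lean document; each statement's English description precedes it below -/
import Mathlib

section
/- With notation as above, if $\lim_{n\to\infty} \frac{1}{n}\log \prod_{\nu=1}^{n} a_{i_\nu j_\nu} = -\lambda$ and $\lim_{n\to\infty}\frac{1}{n}\log\prod_{\nu=1}^{n} b_{i_\nu} = -\lambda^v$ with $0<\lambda^v\le\lambda$, then $\lim_{n\to\infty} L_n(\omega)/n = \lambda^v/\lambda$. -/
open Finset Filter Topology

/-- If `(1/n) log ∏_{ν<n} a (ω ν) → -λ` and `(1/n) log ∏_{ν<n} b (ω ν) → -λᵛ`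
with `0 < λᵛ ≤ λ`, then `L n / n → λᵛ / λ`, where `L n` is the least `l ≥ 1` with
`∏_{ν<l} a (ω ν) ≤ ∏_{ν<n} b (ω ν)`. -/
theorem stmt_1 {D : Type*} [Fintype D]
    (a b : D → ℝ) (amin : ℝ)
    (hamin : 0 < amin) (ha : ∀ d, amin ≤ a d)
    (hab : ∀ d, a d ≤ b d) (hb : ∀ d, b d < 1)
    (ω : ℕ → D) (L : ℕ → ℕ)
    (hL : ∀ n, IsLeast {l : ℕ | 1 ≤ l ∧
      ∏ ν ∈ Finset.range l, a (ω ν) ≤ ∏ ν ∈ Finset.range n, b (ω ν)} (L n))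
    (lam lamv : ℝ) (hlamv : 0 < lamv) (hlams : lamv ≤ lam)
    (hlim : Tendsto (fun n => Real.log (∏ ν ∈ Finset.range n, a (ω ν)) / n)
      atTop (𝓝 (-lam)))
    (hlimv : Tendsto (fun n => Real.log (∏ ν ∈ Finset.range n, b (ω ν)) / n)
      atTop (𝓝 (-lamv))) :
    Tendsto (fun n => (L n : ℝ) / n) atTop (𝓝 (lamv / lam)) := by
  set P : ℕ → ℝ := fun l => ∏ ν ∈ Finset.range l, a (ω ν) with hPdef
  set Q : ℕ → ℝ := fun n => ∏ ν ∈ Finset.range n, b (ω ν) with hQdef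
  have ha0 : ∀ d, 0 < a d := fun d => lt_of_lt_of_le hamin (ha d)
  have hPpos : ∀ l, 0 < P l := fun l => Finset.prod_pos fun ν _ => ha0 _
  have hQpos : ∀ n, 0 < Q n := fun n => Finset.prod_pos fun ν _ =>
    lt_of_lt_of_le (ha0 _) (hab _)
  set α : ℕ → ℝ := fun l => Real.log (P l) with hαdef
  set β : ℕ → ℝ := fun n => Real.log (Q n) with hβdef
  have hamin1 : amin < 1 := lt_of_le_of_lt (le_trans (ha (ω 0)) (hab _)) (hb _)
  have hc : Real.log amin < 0 := Real.log_neg hamin hamin1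
  -- lower bound on α
  have hαlb : ∀ l : ℕ, (l : ℝ) * Real.log amin ≤ α l := by
    intro l
    have h1 : amin ^ l ≤ P l := by
      calc amin ^ l = ∏ _ν ∈ Finset.range l, amin := by
            rw [Finset.prod_const, Finset.card_range]
        _ ≤ P l := Finset.prod_le_prod (fun _ _ => le_of_lt hamin) (fun ν _ => ha _)
    calc (l : ℝ) * Real.log amin = Real.log (amin ^ l) := by rw [Real.log_pow]
      _ ≤ α l := Real.log_le_log (pow_pos hamin l) h1
  have hα_le_β : ∀ n, α (L n) ≤ β n := fun n =>
    Real.log_le_log (hPpos _) ((hL n).1.2)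
  -- β → -∞
  have hβbot : Tendsto β atTop atBot := by
    have hmul : Tendsto (fun n : ℕ => (n : ℝ) * (β n / n)) atTop atBot :=
      Tendsto.atTop_mul_neg (by linarith) tendsto_natCast_atTop_atTop hlimv
    apply hmul.congr'
    filter_upwards [eventually_ge_atTop 1] with n hn
    have hn0 : (n : ℝ) ≠ 0 := by positivity
    field_simp
  -- L → ∞
  have hLtop : Tendsto L atTop atTop := by
    rw [tendsto_atTop]
    intro m
    have hev : ∀ᶠ n in atTop, β n ≤ (m : ℝ) * Real.log amin :=
      hβbot.eventually (eventually_le_atBot _)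
    filter_upwards [hev] with n hn
    have h1 : (L n : ℝ) * Real.log amin ≤ (m : ℝ) * Real.log amin :=
      le_trans (hαlb (L n)) (le_trans (hα_le_β n) hn)
    have : (m : ℝ) ≤ (L n : ℝ) := by nlinarith
    exact_mod_cast this
  -- eventual upper bound on β
  have hβ_le : ∀ n, 2 ≤ L n → β n ≤ α (L n) - Real.log amin := by
    intro n h2
    have hnot : ¬ (P (L n - 1) ≤ Q n) := by
      intro hle
      have := (hL n).2 ⟨by omega, hle⟩
      omega
    push_neg at hnot
    have hstep : L n - 1 + 1 = L n := by omega
    have hsucc : P (L n) = P (L n - 1) * a (ω (L n - 1)) := by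
      rw [← hstep]
      simp [hPdef, Finset.prod_range_succ]
    have hβα : β n ≤ Real.log (P (L n - 1)) := Real.log_le_log (hQpos n) hnot.le
    have hαsplit : α (L n) = Real.log (P (L n - 1)) + Real.log (a (ω (L n - 1))) := by
      rw [hαdef]
      simp only [hsucc]
      exact Real.log_mul (hPpos _).ne' (ha0 _).ne'
    have hloga : Real.log amin ≤ Real.log (a (ω (L n - 1))) :=
      Real.log_le_log hamin (ha _)
    linarith
  -- α (L n) / n → -lamv by squeeze
  have hc_div : Tendsto (fun n : ℕ => Real.log amin / n) atTop (𝓝 0) :=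
    tendsto_const_nhds.div_atTop tendsto_natCast_atTop_atTop
  have hlow : Tendsto (fun n : ℕ => β n / n + Real.log amin / n) atTop (𝓝 (-lamv)) := by
    simpa using hlimv.add hc_div
  have h1 : Tendsto (fun n : ℕ => α (L n) / n) atTop (𝓝 (-lamv)) := by
    apply tendsto_of_tendsto_of_tendsto_of_le_of_le' hlow hlimv
    · filter_upwards [hLtop.eventually (eventually_ge_atTop 2), eventually_ge_atTop 1]
        with n h2 hn1
      have hn0 : (0 : ℝ) < n := by exact_mod_cast hn1
      have := hβ_le n h2
      rw [← add_div]
      gcongr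
      linarith
    · filter_upwards [eventually_ge_atTop 1] with n hn1
      have hn0 : (0 : ℝ) < n := by exact_mod_cast hn1
      gcongr
      exact hα_le_β n
  have h2 : Tendsto (fun n : ℕ => α (L n) / (L n : ℝ)) atTop (𝓝 (-lam)) :=
    hlim.comp hLtop
  have hlam : 0 < lam := lt_of_lt_of_le hlamv hlams
  have h3 : Tendsto (fun n : ℕ => (α (L n) / n) / (α (L n) / (L n : ℝ))) atTop
      (𝓝 (lamv / lam)) := by
    have := h1.div h2 (by simpa using hlam.ne')
    rw [neg_div_neg_eq] at this; exact this
  apply h3.congr'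
  filter_upwards [eventually_ge_atTop 1, hβbot.eventually (eventually_lt_atBot 0)]
    with n hn hb0
  have hα0 : α (L n) < 0 := lt_of_le_of_lt (hα_le_β n) hb0
  have hLn : (0 : ℝ) < (L n : ℝ) := by exact_mod_cast (hL n).1.1
  have hn0 : (0 : ℝ) < (n : ℝ) := by exact_mod_cast hn
  show α (L n) / ↑n / (α (L n) / ↑(L n)) = ↑(L n) / ↑n
  rw [div_div_div_comm, div_self hα0.ne, one_div_div]
end

section
/- Let $\nu$ be a finite Borel measure on a metric space $X$ and $J\subseteq X$. If for every $x\in J$ we have $\liminf_{r\to 0} \frac{\log \nu(B(x,r))}{\log r} \le d$, then the Hausdorff dimension of $J$ is at most $d$. -/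
open Filter Topology MeasureTheory

/-- Mass distribution principle (upper bound direction): if at every point of `J` there are
arbitrarily small radii `r` with `ν (closedBall x r) ≥ r ^ s`, then `μH[s] J` is finite. -/
lemma key_finite_hausdorff {X : Type*} [MetricSpace X] [MeasurableSpace X] [BorelSpace X]
    (ν : Measure X) [IsFiniteMeasure ν] (J : Set X) (s : ℝ) (hs : 0 ≤ s)
    (hpt : ∀ x ∈ J, ∀ ε > (0:ℝ), ∃ r : ℝ, 0 < r ∧ r < ε ∧
      ENNReal.ofReal (r ^ s) ≤ ν (Metric.closedBall x r)) :
    μH[s] J ≠ ⊤ := by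
  -- choose radii depending on a scale `n`
  have choice : ∀ n : ℕ, ∀ x : X, ∃ r : ℝ, 0 < r ∧ r < 1 / (n + 1) ∧
      (x ∈ J → ENNReal.ofReal (r ^ s) ≤ ν (Metric.closedBall x r)) := by
    intro n x
    by_cases hx : x ∈ J
    · obtain ⟨r, hr0, hr1, hr2⟩ := hpt x hx (1 / (n + 1)) (by positivity)
      exact ⟨r, hr0, hr1, fun _ => hr2⟩
    · refine ⟨1 / (n + 2), by positivity, ?_, fun hx' => (hx hx').elim⟩
      have : (n:ℝ) + 1 < (n:ℝ) + 2 := by linarith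
      exact one_div_lt_one_div_of_lt (by positivity) this
  choose rf rf_pos rf_lt rf_meas using choice
  -- Vitali covering argument at each scale
  have vitali : ∀ n : ℕ, ∃ u ⊆ J,
      (u.PairwiseDisjoint fun a => Metric.closedBall a (rf n a)) ∧
      ∀ a ∈ J, ∃ b ∈ u, Metric.closedBall a (rf n a) ⊆ Metric.closedBall b (4 * rf n b) := by
    intro n
    refine Vitali.exists_disjoint_subfamily_covering_enlargement_closedBall J id (rf n) 1
      (fun a _ => le_of_lt ((rf_lt n a).trans_le ?_)) 4 (by norm_num)
    rw [div_le_one (by positivity)]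
    linarith [(Nat.cast_nonneg (α := ℝ) n)]
  choose u hu_sub hu_disj hu_cov using vitali
  -- positivity of the measure of each ball in the family
  have ball_pos : ∀ n : ℕ, ∀ i : ↥(u n),
      0 < ν (Metric.closedBall (i:X) (rf n i)) := fun n i =>
    lt_of_lt_of_le (ENNReal.ofReal_pos.mpr (Real.rpow_pos_of_pos (rf_pos n i) s))
      (rf_meas n i (hu_sub n i.2))
  have disj : ∀ n : ℕ, Pairwise (Function.onFun Disjoint
      fun i : ↥(u n) => Metric.closedBall (i:X) (rf n i)) := by
    intro n i j hij
    exact hu_disj n i.2 j.2 (Subtype.coe_ne_coe.mpr hij)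
  -- countability of each disjoint family
  have u_count : ∀ n : ℕ, Countable ↥(u n) := by
    intro n
    have hc : Set.Countable {i : ↥(u n) | 0 < ν (Metric.closedBall (i:X) (rf n i))} :=
      Measure.countable_meas_pos_of_disjoint_iUnion
        (fun _ => measurableSet_closedBall) (disj n)
    have : {i : ↥(u n) | 0 < ν (Metric.closedBall (i:X) (rf n i))} = Set.univ :=
      Set.eq_univ_of_forall fun i => ball_pos n i
    rw [this] at hc
    exact Set.countable_univ_iff.mp hc
  -- apply the liminf bound on Hausdorff measure
  have hcov : ∀ n : ℕ, J ⊆ ⋃ i : ↥(u n), Metric.closedBall (i:X) (4 * rf n i) := by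
    intro n a ha
    obtain ⟨b, hb, hsub⟩ := hu_cov n a ha
    exact Set.mem_iUnion.mpr ⟨⟨b, hb⟩, hsub (Metric.mem_closedBall_self (rf_pos n a).le)⟩
  have hdiam : ∀ n : ℕ, ∀ i : ↥(u n),
      EMetric.diam (Metric.closedBall (i:X) (4 * rf n i)) ≤
        2 * ENNReal.ofReal (4 / (n + 1)) := by
    intro n i
    have h4 : (0:ℝ) ≤ 4 * rf n i := by nlinarith [rf_pos n (i:X)]
    rw [← Metric.emetric_closedBall (x := (i:X)) h4]
    refine le_trans EMetric.diam_closedBall ?_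
    gcongr
    have h5 := (rf_lt n (i:X)).le
    have h6 : (4:ℝ) / (↑n + 1) = 4 * (1 / (↑n + 1)) := by ring
    rw [h6]
    linarith
  haveI : ∀ n : ℕ, Countable ↥(u n) := u_count
  have key := MeasureTheory.Measure.hausdorffMeasure_le_liminf_tsum s J (l := atTop)
    (fun n : ℕ => 2 * ENNReal.ofReal (4 / (n + 1)))
    (by
      have h1 : Filter.Tendsto (fun n : ℕ => (4:ℝ) / (n + 1)) atTop (𝓝 0) := by
        have := tendsto_one_div_add_atTop_nhds_zero_nat (𝕜 := ℝ)
        have h2 := this.const_mul (4:ℝ)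
        simpa [div_eq_mul_inv, mul_comm] using h2
      have h3 : Filter.Tendsto (fun n : ℕ => ENNReal.ofReal ((4:ℝ) / (n + 1))) atTop (𝓝 0) := by
        rw [← ENNReal.ofReal_zero]
        exact (ENNReal.continuous_ofReal.tendsto 0).comp h1
      have h4 : Filter.Tendsto (fun n : ℕ => 2 * ENNReal.ofReal ((4:ℝ) / (n + 1))) atTop
          (𝓝 (2 * 0)) := ENNReal.Tendsto.const_mul h3 (Or.inr ENNReal.ofNat_ne_top)
      simpa using h4)
    (fun n (i : ↥(u n)) => Metric.closedBall (i:X) (4 * rf n i))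
    (Filter.Eventually.of_forall fun n => hdiam n)
    (Filter.Eventually.of_forall hcov)
  -- bound the sums by a uniform constant
  set C : ENNReal := ENNReal.ofReal ((8:ℝ) ^ s) * ν Set.univ with hC
  have hsum : ∀ n : ℕ, (∑' i : ↥(u n),
      EMetric.diam (Metric.closedBall (i:X) (4 * rf n i)) ^ s) ≤ C := by
    intro n
    have step1 : ∀ i : ↥(u n),
        EMetric.diam (Metric.closedBall (i:X) (4 * rf n i)) ^ s ≤
          ENNReal.ofReal ((8:ℝ) ^ s) * ν (Metric.closedBall (i:X) (rf n i)) := by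
      intro i
      have h4 : (0:ℝ) ≤ 4 * rf n i := by nlinarith [rf_pos n (i:X)]
      have hd : EMetric.diam (Metric.closedBall (i:X) (4 * rf n i)) ≤
          ENNReal.ofReal (8 * rf n i) := by
        rw [← Metric.emetric_closedBall (x := (i:X)) h4]
        refine le_trans EMetric.diam_closedBall ?_
        rw [show (8:ℝ) * rf n i = 2 * (4 * rf n i) by ring,
          ENNReal.ofReal_mul (by norm_num : (0:ℝ) ≤ 2), ENNReal.ofReal_ofNat]
      calc EMetric.diam (Metric.closedBall (i:X) (4 * rf n i)) ^ s
          ≤ ENNReal.ofReal (8 * rf n i) ^ s := ENNReal.rpow_le_rpow hd hs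
        _ = ENNReal.ofReal ((8 * rf n i) ^ s) :=
            ENNReal.ofReal_rpow_of_pos (by nlinarith [rf_pos n (i:X)])
        _ = ENNReal.ofReal ((8:ℝ) ^ s * (rf n i) ^ s) := by
            rw [Real.mul_rpow (by norm_num) (rf_pos n i).le]
        _ = ENNReal.ofReal ((8:ℝ) ^ s) * ENNReal.ofReal ((rf n i) ^ s) := by
            rw [ENNReal.ofReal_mul (by positivity)]
        _ ≤ ENNReal.ofReal ((8:ℝ) ^ s) * ν (Metric.closedBall (i:X) (rf n i)) := by
            gcongr
            exact rf_meas n i (hu_sub n i.2)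
    calc (∑' i : ↥(u n), EMetric.diam (Metric.closedBall (i:X) (4 * rf n i)) ^ s)
        ≤ ∑' i : ↥(u n),
            ENNReal.ofReal ((8:ℝ) ^ s) * ν (Metric.closedBall (i:X) (rf n i)) :=
          ENNReal.tsum_le_tsum step1
      _ = ENNReal.ofReal ((8:ℝ) ^ s) *
            ∑' i : ↥(u n), ν (Metric.closedBall (i:X) (rf n i)) := ENNReal.tsum_mul_left
      _ = ENNReal.ofReal ((8:ℝ) ^ s) *
            ν (⋃ i : ↥(u n), Metric.closedBall (i:X) (rf n i)) := by
          haveI := u_count n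
          rw [measure_iUnion (disj n) (fun _ => measurableSet_closedBall)]
      _ ≤ C := by
          rw [hC]
          gcongr
          exact Set.subset_univ _
  have hliminf : Filter.liminf (fun n : ℕ => ∑' i : ↥(u n),
      EMetric.diam (Metric.closedBall (i:X) (4 * rf n i)) ^ s) atTop ≤ C :=
    Filter.liminf_le_of_frequently_le (Filter.Frequently.of_forall hsum)
  have hfin : C ≠ ⊤ := ENNReal.mul_ne_top ENNReal.ofReal_ne_top (measure_ne_top ν _)
  exact ne_top_of_le_ne_top hfin (key.trans hliminf)

/-- If `ν` is a finite Borel measure and the lower pointwise dimension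
`liminf_{r→0} log ν(B(x,r)) / log r` of `ν` at every point of `J` is at most `d`, then
the Hausdorff dimension of `J` is at most `d`.
The quotient is computed in `EReal`, with `log 0 = ⊥`. -/
theorem stmt_3 {X : Type*} [MetricSpace X] [MeasurableSpace X] [BorelSpace X]
    (ν : Measure X) [IsFiniteMeasure ν] (J : Set X) (d : ℝ)
    (h : ∀ x ∈ J,
      liminf (fun r : ℝ =>
        ENNReal.log (ν (Metric.closedBall x r)) / (Real.log r : EReal)) (𝓝[>] 0)
        ≤ (d : EReal)) :
    dimH J ≤ ENNReal.ofReal d := by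
  by_contra hcon
  push_neg at hcon
  obtain ⟨c, hc1, hc2⟩ := ENNReal.lt_iff_exists_nnreal_btwn.mp hcon
  -- `d < c` as reals
  have hdc : d < (c:ℝ) := by
    by_contra hle
    push_neg at hle
    have : (c : ENNReal) ≤ ENNReal.ofReal d := by
      rw [← ENNReal.ofReal_coe_nnreal]
      exact ENNReal.ofReal_le_ofReal hle
    exact absurd hc1 (not_lt_of_ge this)
  -- pointwise frequent lower bound on ball measures
  have hpt : ∀ x ∈ J, ∀ ε > (0:ℝ), ∃ r : ℝ, 0 < r ∧ r < ε ∧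
      ENNReal.ofReal (r ^ (c:ℝ)) ≤ ν (Metric.closedBall x r) := by
    intro x hx ε hε
    have hlim : liminf (fun r : ℝ =>
        ENNReal.log (ν (Metric.closedBall x r)) / (Real.log r : EReal)) (𝓝[>] 0)
        < ((c:ℝ) : EReal) := lt_of_le_of_lt (h x hx) (EReal.coe_lt_coe_iff.mpr hdc)
    have hfreq := Filter.frequently_lt_of_liminf_lt (by isBoundedDefault) hlim
    have hev : ∀ᶠ r in 𝓝[>] (0:ℝ), r ∈ Set.Ioo 0 (min ε 1) :=
      Ioo_mem_nhdsGT (lt_min hε one_pos)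
    obtain ⟨r, hfr, hr0, hrm⟩ := (hfreq.and_eventually hev).exists
    have hr1 : r < 1 := lt_of_lt_of_le hrm (min_le_right _ _)
    have hrε : r < ε := lt_of_lt_of_le hrm (min_le_left _ _)
    have hlog : Real.log r < 0 := Real.log_neg hr0 hr1
    -- the measure of the ball is positive
    have hν0 : ν (Metric.closedBall x r) ≠ 0 := by
      intro h0
      rw [h0] at hfr
      have : (⊥ : EReal) / (Real.log r : EReal) = ⊤ := by
        rw [EReal.div_eq_inv_mul, ← EReal.coe_inv, mul_comm]
        exact EReal.bot_mul_coe_of_neg (inv_lt_zero.mpr hlog)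
      rw [ENNReal.log_zero, this] at hfr
      exact absurd hfr (not_top_lt)
    have hνtop : ν (Metric.closedBall x r) ≠ ⊤ := measure_ne_top ν _
    set p : ℝ := Real.log (ν (Metric.closedBall x r)).toReal with hp
    have hlogν : ENNReal.log (ν (Metric.closedBall x r)) = (p : EReal) :=
      ENNReal.log_pos_real hν0 hνtop
    rw [hlogν, ← EReal.coe_div, EReal.coe_lt_coe_iff] at hfr
    have hmul : (c:ℝ) * Real.log r < p := (div_lt_iff_of_neg hlog).mp hfr
    have hrpow : Real.log (r ^ (c:ℝ)) < p := by
      rwa [Real.log_rpow hr0]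
    have hlt : r ^ (c:ℝ) < (ν (Metric.closedBall x r)).toReal := by
      have hppos : 0 < (ν (Metric.closedBall x r)).toReal :=
        ENNReal.toReal_pos hν0 hνtop
      have := Real.exp_lt_exp.mpr hrpow
      rwa [Real.exp_log (Real.rpow_pos_of_pos hr0 _), hp, Real.exp_log hppos] at this
    refine ⟨r, hr0, hrε, ?_⟩
    calc ENNReal.ofReal (r ^ (c:ℝ)) ≤ ENNReal.ofReal (ν (Metric.closedBall x r)).toReal :=
          ENNReal.ofReal_le_ofReal hlt.le
      _ = ν (Metric.closedBall x r) := ENNReal.ofReal_toReal hνtop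
  have := key_finite_hausdorff ν J (c:ℝ) c.coe_nonneg hpt
  exact absurd hc2 (not_lt_of_ge (dimH_le_of_hausdorffMeasure_ne_top this))
end

section
/- With notation as in the previous statement, suppose additionally $D:\mathcal{M}_\sigma(\Sigma)\to\mathbb{R}$ is affine (i.e. $D(\rho\mu+(1-\rho)\nu)=\rho D(\mu)+(1-\rho)D(\nu)$) or more generally continuous along line segments $\rho\mapsto\rho\mu+(1-\rho)\nu$. Then $f(\alpha)=\sup\{D(\mu):\int\varphi\,d\mu=\alpha\}$ is lower semi-continuous, hence continuous, on $[\alpha_{\min},\alpha_{\max}]$. -/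
set_option linter.unusedSectionVars false
set_option linter.unusedVariables false
set_option maxHeartbeats 1000000

open Filter Topology Finset MeasureTheory BoundedContinuousFunction
open scoped ENNReal NNReal

section Part1

variable {D : Type*} [Fintype D] [Nonempty D] [TopologicalSpace D]
    [DiscreteTopology D] [MeasurableSpace D] [BorelSpace D]

def projn (n : ℕ) : (ℕ → D) → (Fin n → D) := fun ω i => ω i

lemma continuous_projn (n : ℕ) : Continuous (projn (D := D) n) :=
  continuous_pi fun i => continuous_apply _

lemma measurable_projn (n : ℕ) : Measurable (projn (D := D) n) :=
  (continuous_projn n).measurable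

def cylSet (n : ℕ) (S : Set (Fin n → D)) : Set (ℕ → D) := projn n ⁻¹' S

lemma isClopen_cylSet (n : ℕ) (S : Set (Fin n → D)) : IsClopen (cylSet n S) :=
  (isClopen_discrete S).preimage (continuous_projn n)

lemma isCompact_cylSet (n : ℕ) (S : Set (Fin n → D)) : IsCompact (cylSet n S) :=
  (isClopen_cylSet n S).isClosed.isCompact

lemma measurableSet_cylSet (n : ℕ) (S : Set (Fin n → D)) : MeasurableSet (cylSet n S) :=
  (measurable_projn n) (by measurability)

lemma cylSet_lift {n m : ℕ} (hnm : n ≤ m) (S : Set (Fin n → D)) :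
    cylSet n S = cylSet m ((fun (g : Fin m → D) (i : Fin n) =>
      g ⟨i, lt_of_lt_of_le i.2 hnm⟩) ⁻¹' S) := rfl

variable (F : Ultrafilter (ProbabilityMeasure (ℕ → D)))

noncomputable def uval (A : Set (ℕ → D)) : ℝ≥0∞ :=
  (F.map (fun μ : ProbabilityMeasure (ℕ → D) => (μ : Measure (ℕ → D)) A)).lim

lemma tendsto_uval (A : Set (ℕ → D)) :
    Tendsto (fun μ : ProbabilityMeasure (ℕ → D) => (μ : Measure (ℕ → D)) A) F (𝓝 (uval F A)) :=
  Ultrafilter.le_nhds_lim _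

lemma uval_le_one (A : Set (ℕ → D)) : uval F A ≤ 1 :=
  le_of_tendsto (tendsto_uval F A) (Eventually.of_forall fun μ => prob_le_one)

lemma uval_ne_top (A : Set (ℕ → D)) : uval F A ≠ ∞ :=
  fun h => by simpa [h] using uval_le_one F A

lemma uval_univ : uval F Set.univ = 1 :=
  tendsto_nhds_unique (tendsto_uval F Set.univ)
    (by simpa using tendsto_const_nhds (α := ℝ≥0∞) (f := (F : Filter _)))

lemma uval_mono {A B : Set (ℕ → D)} (h : A ⊆ B) : uval F A ≤ uval F B :=
  le_of_tendsto_of_tendsto' (tendsto_uval F A) (tendsto_uval F B)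
    (fun μ => measure_mono h)

lemma uval_union_le (A B : Set (ℕ → D)) : uval F (A ∪ B) ≤ uval F A + uval F B :=
  le_of_tendsto_of_tendsto' (tendsto_uval F (A ∪ B))
    ((tendsto_uval F A).add (tendsto_uval F B)) (fun μ => measure_union_le A B)

lemma uval_union {A B : Set (ℕ → D)} (hd : Disjoint A B) (hB : MeasurableSet B) :
    uval F (A ∪ B) = uval F A + uval F B :=
  tendsto_nhds_unique (tendsto_uval F (A ∪ B))
    (by
      have := (tendsto_uval F A).add (tendsto_uval F B)
      refine this.congr fun μ => ?_
      exact (measure_union hd hB).symm)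

/-- the "outer" content of an arbitrary set -/
noncomputable def preContent (K : Set (ℕ → D)) : ℝ≥0∞ :=
  ⨅ (n : ℕ) (S : Set (Fin n → D)) (_ : K ⊆ cylSet n S), uval F (cylSet n S)

lemma preContent_le {K : Set (ℕ → D)} {n : ℕ} {S : Set (Fin n → D)} (h : K ⊆ cylSet n S) :
    preContent F K ≤ uval F (cylSet n S) := by
  refine le_trans (iInf_le _ n) ?_
  exact le_trans (iInf_le _ S) (iInf_le _ h)

lemma le_preContent {K : Set (ℕ → D)} {b : ℝ≥0∞}
    (h : ∀ (n : ℕ) (S : Set (Fin n → D)), K ⊆ cylSet n S → b ≤ uval F (cylSet n S)) :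
    b ≤ preContent F K :=
  le_iInf fun n => le_iInf fun S => le_iInf fun hS => h n S hS

lemma preContent_le_one (K : Set (ℕ → D)) : preContent F K ≤ 1 := by
  have h : K ⊆ cylSet 0 Set.univ := by intro x _; trivial
  exact le_trans (preContent_le F h) (uval_le_one F _)

lemma preContent_ne_top (K : Set (ℕ → D)) : preContent F K ≠ ∞ :=
  fun h => by simpa [h] using preContent_le_one F K

lemma preContent_mono {K L : Set (ℕ → D)} (h : K ⊆ L) : preContent F K ≤ preContent F L :=
  le_preContent F fun n S hS => preContent_le F (h.trans hS)

lemma preContent_cylSet (n : ℕ) (S : Set (Fin n → D)) :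
    preContent F (cylSet n S) = uval F (cylSet n S) := by
  refine le_antisymm (preContent_le F subset_rfl) ?_
  exact le_preContent F fun m T hT => uval_mono F hT

/-- subadditivity -/
lemma preContent_union_le (K L : Set (ℕ → D)) :
    preContent F (K ∪ L) ≤ preContent F K + preContent F L := by
  refine ENNReal.le_of_forall_pos_le_add fun ε hε hfin => ?_
  have hK : preContent F K < preContent F K + (ε / 2 : ℝ≥0) := by
    refine ENNReal.lt_add_right (preContent_ne_top F K) ?_
    simpa using (half_pos hε).ne'
  have hL : preContent F L < preContent F L + (ε / 2 : ℝ≥0) := by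
    refine ENNReal.lt_add_right (preContent_ne_top F L) ?_
    simpa using (half_pos hε).ne'
  rw [preContent, iInf_lt_iff] at hK hL
  obtain ⟨n₁, hn₁⟩ := hK
  rw [iInf_lt_iff] at hn₁
  obtain ⟨S₁, hS₁⟩ := hn₁
  rw [iInf_lt_iff] at hS₁
  obtain ⟨h₁, hu₁⟩ := hS₁
  obtain ⟨n₂, hn₂⟩ := hL
  rw [iInf_lt_iff] at hn₂
  obtain ⟨S₂, hS₂⟩ := hn₂
  rw [iInf_lt_iff] at hS₂
  obtain ⟨h₂, hu₂⟩ := hS₂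
  -- lift both to level n = max n₁ n₂
  set n := max n₁ n₂ with hn
  rw [cylSet_lift (le_max_left n₁ n₂) S₁] at h₁ hu₁
  rw [cylSet_lift (le_max_right n₁ n₂) S₂] at h₂ hu₂
  set T₁ := (fun (g : Fin n → D) (i : Fin n₁) => g ⟨i, lt_of_lt_of_le i.2 (le_max_left n₁ n₂)⟩) ⁻¹' S₁
  set T₂ := (fun (g : Fin n → D) (i : Fin n₂) => g ⟨i, lt_of_lt_of_le i.2 (le_max_right n₁ n₂)⟩) ⁻¹' S₂
  have hsub : K ∪ L ⊆ cylSet n (T₁ ∪ T₂) := by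
    have : cylSet n (T₁ ∪ T₂) = cylSet n T₁ ∪ cylSet n T₂ := rfl
    rw [this]
    exact Set.union_subset_union h₁ h₂
  calc preContent F (K ∪ L) ≤ uval F (cylSet n (T₁ ∪ T₂)) := preContent_le F hsub
    _ ≤ uval F (cylSet n T₁) + uval F (cylSet n T₂) := by
        have : cylSet n (T₁ ∪ T₂) = cylSet n T₁ ∪ cylSet n T₂ := rfl
        rw [this]; exact uval_union_le F _ _
    _ ≤ (preContent F K + ((ε / 2 : ℝ≥0) : ℝ≥0∞)) + (preContent F L + ((ε / 2 : ℝ≥0) : ℝ≥0∞)) :=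
        add_le_add hu₁.le hu₂.le
    _ = preContent F K + preContent F L + ε := by
        rw [add_add_add_comm, ← ENNReal.coe_add]
        norm_num


/-- cylindrical envelope of a set -/
def envl (n : ℕ) (K : Set (ℕ → D)) : Set (ℕ → D) := cylSet n (projn n '' K)

lemma subset_envl (n : ℕ) (K : Set (ℕ → D)) : K ⊆ envl n K :=
  fun x hx => ⟨x, hx, rfl⟩

lemma envl_antitone {n m : ℕ} (h : n ≤ m) (K : Set (ℕ → D)) : envl m K ⊆ envl n K := by
  rintro x ⟨y, hy, hyx⟩
  refine ⟨y, hy, ?_⟩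
  funext i
  exact congrFun hyx ⟨i, lt_of_lt_of_le i.2 h⟩

lemma mem_of_forall_mem_envl {K : Set (ℕ → D)} (hK : IsCompact K) (hKc : IsClosed K)
    {x : ℕ → D} (h : ∀ n, x ∈ envl n K) : x ∈ K := by
  set Y : ℕ → Set (ℕ → D) := fun n => K ∩ cylSet n {projn n x} with hY
  have hanti : ∀ {n m : ℕ}, n ≤ m → Y m ⊆ Y n := by
    intro n m hnm
    rintro y ⟨hyK, hy⟩
    refine ⟨hyK, ?_⟩
    have : projn m y = projn m x := hy
    show projn n y = projn n x
    funext i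
    exact congrFun this ⟨i, lt_of_lt_of_le i.2 hnm⟩
  have hne : ∀ n, (Y n).Nonempty := by
    intro n
    obtain ⟨y, hyK, hyx⟩ := h n
    exact ⟨y, hyK, by simpa [cylSet, Set.mem_preimage] using hyx⟩
  have hcompact : ∀ n, IsCompact (Y n) := fun n =>
    hK.inter_right (isClopen_cylSet n _).isClosed
  have hclosed : ∀ n, IsClosed (Y n) := fun n =>
    hKc.inter (isClopen_cylSet n _).isClosed
  have hdir : Directed (fun x1 x2 => x1 ⊇ x2) Y := fun a b =>
    ⟨max a b, hanti (le_max_left a b), hanti (le_max_right a b)⟩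
  obtain ⟨y, hy⟩ := IsCompact.nonempty_iInter_of_directed_nonempty_isCompact_isClosed
    Y hdir hne hcompact hclosed
  simp only [Set.mem_iInter] at hy
  have hxy : x = y := by
    funext i
    have := (hy (i + 1)).2
    have : projn (i+1) y = projn (i+1) x := this
    exact (congrFun this ⟨i, Nat.lt_succ_self i⟩).symm
  exact hxy ▸ (hy 0).1

lemma exists_envl_disjoint {K L : Set (ℕ → D)} (hK : IsCompact K) (hKc : IsClosed K)
    (hL : IsCompact L) (hLc : IsClosed L) (hd : Disjoint K L) :
    ∃ n, envl n K ∩ envl n L = ∅ := by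
  by_contra hcon
  push_neg at hcon
  have hne : ∀ n, (envl n K ∩ envl n L).Nonempty := hcon
  set G : ℕ → Set (ℕ → D) := fun n => envl n K ∩ envl n L with hG
  have hanti : ∀ {n m : ℕ}, n ≤ m → G m ⊆ G n := fun hnm =>
    Set.inter_subset_inter (envl_antitone hnm K) (envl_antitone hnm L)
  have hdir : Directed (fun x1 x2 => x1 ⊇ x2) G := fun a b =>
    ⟨max a b, hanti (le_max_left a b), hanti (le_max_right a b)⟩
  obtain ⟨x, hx⟩ := IsCompact.nonempty_iInter_of_directed_nonempty_isCompact_isClosed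
    G hdir hne (fun n => isCompact_cylSet _ _ |>.inter_right (isClopen_cylSet _ _).isClosed)
    (fun n => (isClopen_cylSet _ _).isClosed.inter (isClopen_cylSet _ _).isClosed)
  simp only [Set.mem_iInter] at hx
  have hxK : x ∈ K := mem_of_forall_mem_envl hK hKc fun n => (hx n).1
  have hxL : x ∈ L := mem_of_forall_mem_envl hL hLc fun n => (hx n).2
  exact Set.disjoint_left.mp hd hxK hxL

lemma preContent_union {K L : Set (ℕ → D)} (hK : IsCompact K) (hKc : IsClosed K)
    (hL : IsCompact L) (hLc : IsClosed L) (hd : Disjoint K L) :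
    preContent F (K ∪ L) = preContent F K + preContent F L := by
  refine le_antisymm (preContent_union_le F K L) ?_
  obtain ⟨N, hN⟩ := exists_envl_disjoint hK hKc hL hLc hd
  refine le_preContent F fun n S hS => ?_
  -- lift everything to level m = max n N
  set m := max n N with hm
  rw [cylSet_lift (le_max_left n N) S] at hS ⊢
  set S' := (fun (g : Fin m → D) (i : Fin n) => g ⟨i, lt_of_lt_of_le i.2 (le_max_left n N)⟩) ⁻¹' S
  have hKenv : envl N K = cylSet m ((fun (g : Fin m → D) (i : Fin N) =>
      g ⟨i, lt_of_lt_of_le i.2 (le_max_right n N)⟩) ⁻¹' (projn N '' K)) :=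
    cylSet_lift (le_max_right n N) _
  have hLenv : envl N L = cylSet m ((fun (g : Fin m → D) (i : Fin N) =>
      g ⟨i, lt_of_lt_of_le i.2 (le_max_right n N)⟩) ⁻¹' (projn N '' L)) :=
    cylSet_lift (le_max_right n N) _
  set P₁ := (fun (g : Fin m → D) (i : Fin N) =>
      g ⟨i, lt_of_lt_of_le i.2 (le_max_right n N)⟩) ⁻¹' (projn N '' K)
  set P₂ := (fun (g : Fin m → D) (i : Fin N) =>
      g ⟨i, lt_of_lt_of_le i.2 (le_max_right n N)⟩) ⁻¹' (projn N '' L)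
  have hA₁ : K ⊆ cylSet m (S' ∩ P₁) := by
    intro x hx
    have h2 : x ∈ cylSet m P₁ := hKenv ▸ subset_envl N K hx
    exact ⟨hS (Or.inl hx), h2⟩
  have hA₂ : L ⊆ cylSet m (S' ∩ P₂) := by
    intro x hx
    have h2 : x ∈ cylSet m P₂ := hLenv ▸ subset_envl N L hx
    exact ⟨hS (Or.inr hx), h2⟩
  have hdisj : Disjoint (cylSet m (S' ∩ P₁)) (cylSet m (S' ∩ P₂)) := by
    rw [Set.disjoint_iff_inter_eq_empty]
    have hsub : cylSet m (S' ∩ P₁) ∩ cylSet m (S' ∩ P₂) ⊆ envl N K ∩ envl N L := by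
      rw [hKenv, hLenv]
      exact Set.inter_subset_inter (fun x hx => hx.2) (fun x hx => hx.2)
    exact Set.subset_eq_empty hsub hN
  calc preContent F K + preContent F L
      ≤ uval F (cylSet m (S' ∩ P₁)) + uval F (cylSet m (S' ∩ P₂)) :=
        add_le_add (preContent_le F hA₁) (preContent_le F hA₂)
    _ = uval F (cylSet m (S' ∩ P₁) ∪ cylSet m (S' ∩ P₂)) :=
        (uval_union F hdisj (measurableSet_cylSet m _)).symm
    _ ≤ uval F (cylSet m S') := by
        refine uval_mono F ?_
        refine Set.union_subset ?_ ?_ <;> exact fun x hx => hx.1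


/-- The content induced by the ultrafilter. -/
noncomputable def limContent : Content (ℕ → D) where
  toFun K := (preContent F K).toNNReal
  mono' K₁ K₂ h := by
    have := preContent_mono F h
    exact ENNReal.toNNReal_mono (preContent_ne_top F _) this
  sup_disjoint' K₁ K₂ hd h₁ h₂ := by
    have : preContent F ((K₁ ⊔ K₂ : TopologicalSpace.Compacts (ℕ → D)) : Set (ℕ → D))
        = preContent F K₁ + preContent F K₂ := by
      have hco : ((K₁ ⊔ K₂ : TopologicalSpace.Compacts (ℕ → D)) : Set (ℕ → D))
          = (K₁ : Set (ℕ → D)) ∪ K₂ := rfl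
      rw [hco]
      exact preContent_union F K₁.isCompact h₁ K₂.isCompact h₂ hd
    show (preContent F ↑(K₁ ⊔ K₂)).toNNReal
      = (preContent F ↑K₁).toNNReal + (preContent F ↑K₂).toNNReal
    rw [this, ENNReal.toNNReal_add (preContent_ne_top F _) (preContent_ne_top F _)]
  sup_le' K₁ K₂ := by
    have h1 : preContent F ((K₁ ⊔ K₂ : TopologicalSpace.Compacts (ℕ → D)) : Set (ℕ → D))
        ≤ preContent F K₁ + preContent F K₂ := preContent_union_le F _ _
    have h2 := ENNReal.toNNReal_mono
      (by exact ENNReal.add_ne_top.mpr ⟨preContent_ne_top F _, preContent_ne_top F _⟩) h1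
    show (preContent F ↑(K₁ ⊔ K₂)).toNNReal
      ≤ (preContent F ↑K₁).toNNReal + (preContent F ↑K₂).toNNReal
    rwa [ENNReal.toNNReal_add (preContent_ne_top F _) (preContent_ne_top F _)] at h2

lemma limContent_apply (K : TopologicalSpace.Compacts (ℕ → D)) :
    (limContent F) K = preContent F (K : Set (ℕ → D)) := by
  show ((preContent F (K : Set (ℕ → D))).toNNReal : ℝ≥0∞) = _
  exact ENNReal.coe_toNNReal (preContent_ne_top F _)

/-- The limit measure. -/
noncomputable def limMeasure : Measure (ℕ → D) := (limContent F).measure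

lemma limMeasure_cylSet (n : ℕ) (S : Set (Fin n → D)) :
    limMeasure F (cylSet n S) = uval F (cylSet n S) := by
  rw [limMeasure, Content.measure_apply _ (measurableSet_cylSet n S),
    Content.outerMeasure_of_isOpen _ _ (isClopen_cylSet n S).isOpen]
  have h := Content.innerContent_of_isCompact (limContent F) (isCompact_cylSet n S)
    (isClopen_cylSet n S).isOpen
  rw [h]
  have h2 := limContent_apply F ⟨cylSet n S, isCompact_cylSet n S⟩
  calc (fun s => ((limContent F).toFun s : ℝ≥0∞)) ⟨cylSet n S, isCompact_cylSet n S⟩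
      = (limContent F) ⟨cylSet n S, isCompact_cylSet n S⟩ := rfl
    _ = preContent F (cylSet n S) := h2
    _ = uval F (cylSet n S) := preContent_cylSet F n S

instance limMeasure_prob : IsProbabilityMeasure (limMeasure F) := by
  constructor
  have h : (Set.univ : Set (ℕ → D)) = cylSet 0 Set.univ := by
    simp [cylSet]
  rw [h, limMeasure_cylSet, ← h, uval_univ]

/-- The limit probability measure. -/
noncomputable def limPM : ProbabilityMeasure (ℕ → D) := ⟨limMeasure F, limMeasure_prob F⟩


/-- extension of a finite word to a full sequence -/
noncomputable def extn (n : ℕ) : (Fin n → D) → (ℕ → D) := fun σ i =>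
  if h : i < n then σ ⟨i, h⟩ else Classical.arbitrary D

lemma continuous_extn (n : ℕ) : Continuous (extn (D := D) n) :=
  continuous_of_discreteTopology

lemma projn_extn_projn (n : ℕ) (x : ℕ → D) : projn n (extn n (projn n x)) = projn n x := by
  funext i
  show extn n (projn n x) i = x i
  simp [extn, i.2, projn]

/-- uniform approximation level for a continuous function -/
lemma exists_level (g : (ℕ → D) → ℝ) (hg : Continuous g) {ε : ℝ} (hε : 0 < ε) :
    ∃ n : ℕ, ∀ x y : ℕ → D, projn n x = projn n y → |g x - g y| ≤ ε := by
  have H : ∀ x : ℕ → D, ∃ n : ℕ, ∀ y, projn n y = projn n x → |g y - g x| ≤ ε / 2 := by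
    intro x
    have hx : x ∈ g ⁻¹' Metric.ball (g x) (ε / 2) := by
      simp [Metric.mem_ball, hε, half_pos hε]
    obtain ⟨I, u, hIu, hsub⟩ := (isOpen_pi_iff.mp (Metric.isOpen_ball.preimage hg)) x hx
    refine ⟨I.sup id + 1, fun y hy => ?_⟩
    have hyI : y ∈ (I : Set ℕ).pi u := by
      intro a ha
      have haI : a < I.sup id + 1 := Nat.lt_succ_of_le (Finset.le_sup (f := id) ha)
      have : y a = x a := congrFun hy ⟨a, haI⟩
      rw [this]
      exact (hIu a ha).2
    have := hsub hyI
    simp only [Set.mem_preimage, Metric.mem_ball, Real.dist_eq] at this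
    exact this.le
  choose nf hnf using H
  set V : (ℕ → D) → Set (ℕ → D) := fun x => cylSet (nf x) {projn (nf x) x} with hV
  have hVnhds : ∀ x ∈ (Set.univ : Set (ℕ → D)), V x ∈ 𝓝 x := by
    intro x _
    refine (isClopen_cylSet _ _).isOpen.mem_nhds ?_
    show projn (nf x) x ∈ ({projn (nf x) x} : Set _)
    rfl
  obtain ⟨t, _, ht⟩ := isCompact_univ.elim_nhds_subcover V hVnhds
  refine ⟨t.sup nf, fun x y hxy => ?_⟩
  obtain ⟨x₀, hx₀t, hx₀⟩ := Set.mem_iUnion₂.mp (ht (Set.mem_univ x))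
  have hxlvl : projn (nf x₀) x = projn (nf x₀) x₀ := hx₀
  have hylvl : projn (nf x₀) y = projn (nf x₀) x₀ := by
    rw [← hxlvl]
    funext i
    exact (congrFun hxy ⟨i, lt_of_lt_of_le i.2 (Finset.le_sup hx₀t)⟩).symm
  have h1 := hnf x₀ x hxlvl
  have h2 := hnf x₀ y hylvl
  calc |g x - g y| = |(g x - g x₀) - (g y - g x₀)| := by ring_nf
    _ ≤ |g x - g x₀| + |g y - g x₀| := abs_sub _ _
    _ ≤ ε / 2 + ε / 2 := add_le_add h1 h2
    _ = ε := add_halves ε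

/-- the discretized integral -/
noncomputable def discSum (n : ℕ) (g : (ℕ → D) →ᵇ ℝ) (ρ : Measure (ℕ → D)) : ℝ :=
  ∑ σ : Fin n → D, (ρ (cylSet n {σ})).toReal * g (extn n σ)

lemma discSum_close {n : ℕ} {g : (ℕ → D) →ᵇ ℝ} {ε : ℝ}
    (hlvl : ∀ x y : ℕ → D, projn n x = projn n y → |g x - g y| ≤ ε)
    (ρ : Measure (ℕ → D)) [IsProbabilityMeasure ρ] :
    |(∫ x, g x ∂ρ) - discSum n g ρ| ≤ ε := by
  classical
  set e : (ℕ → D) → (ℕ → D) := fun x => extn n (projn n x) with he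
  have hecont : Continuous e := (continuous_extn n).comp (continuous_projn n)
  have hge : (fun x => g (e x)) = (g.compContinuous ⟨e, hecont⟩) := rfl
  have hinte : Integrable (fun x => g (e x)) ρ := by
    rw [hge]; exact (g.compContinuous ⟨e, hecont⟩).integrable ρ
  have hintg : Integrable (fun x => g x) ρ := g.integrable ρ
  haveI : IsProbabilityMeasure (ρ.map (projn n)) :=
    Measure.isProbabilityMeasure_map (measurable_projn n).aemeasurable
  have hsum : ∫ x, g (e x) ∂ρ = discSum n g ρ := by
    have h1 : ∫ x, g (e x) ∂ρ = ∫ σ, g (extn n σ) ∂(ρ.map (projn n)) :=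
      (integral_map (measurable_projn n).aemeasurable
        (g.continuous.comp (continuous_extn n)).aestronglyMeasurable).symm
    have h2 : ∫ σ, g (extn n σ) ∂(ρ.map (projn n))
        = ∑ σ : Fin n → D, ((ρ.map (projn n)) {σ}).toReal • g (extn n σ) :=
      (integral_fintype Integrable.of_finite).trans (by simp only [Measure.real])
    have h3 : ∀ σ : Fin n → D, (ρ.map (projn n)) {σ} = ρ (cylSet n {σ}) := fun σ =>
      Measure.map_apply (measurable_projn n) (measurableSet_singleton σ)
    rw [h1, h2, discSum]
    refine Finset.sum_congr rfl fun σ _ => ?_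
    rw [h3 σ, smul_eq_mul]
  rw [← hsum, ← integral_sub hintg hinte]
  have hptwise : ∀ x, ‖g x - g (e x)‖ ≤ ε := fun x => by
    rw [Real.norm_eq_abs]
    exact hlvl x (e x) (projn_extn_projn n x).symm
  calc |∫ x, (g x - g (e x)) ∂ρ| ≤ ∫ x, ‖g x - g (e x)‖ ∂ρ := by
        rw [← Real.norm_eq_abs]
        exact norm_integral_le_integral_norm _
    _ ≤ ∫ _x, ε ∂ρ := integral_mono (hintg.sub hinte).norm (integrable_const ε)
        fun x => hptwise x
    _ = ε := by simp


lemma tendsto_discSum (n : ℕ) (g : (ℕ → D) →ᵇ ℝ) :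
    Tendsto (fun μ : ProbabilityMeasure (ℕ → D) => discSum n g (μ : Measure (ℕ → D))) F
      (𝓝 (discSum n g (limPM F : Measure (ℕ → D)))) := by
  have hlim : ∀ σ : Fin n → D,
      ((limPM F : Measure (ℕ → D)) (cylSet n {σ})) = uval F (cylSet n {σ}) := fun σ =>
    limMeasure_cylSet F n {σ}
  unfold discSum
  refine tendsto_finset_sum _ fun σ _ => ?_
  rw [hlim σ]
  refine Tendsto.mul_const _ ?_
  exact (ENNReal.tendsto_toReal (uval_ne_top F _)).comp (tendsto_uval F _)

theorem ultrafilter_le_nhds_limPM : (F : Filter (ProbabilityMeasure (ℕ → D))) ≤ 𝓝 (limPM F) := by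
  have : Tendsto id (F : Filter (ProbabilityMeasure (ℕ → D))) (𝓝 (limPM F)) := by
    rw [ProbabilityMeasure.tendsto_iff_forall_integral_tendsto]
    intro g
    rw [Metric.tendsto_nhds]
    intro ε hε
    have hε3 : 0 < ε / 3 := by linarith
    obtain ⟨n, hn⟩ := exists_level (D := D) g g.continuous (half_pos hε3)
    have hn' : ∀ x y : ℕ → D, projn n x = projn n y → |g x - g y| ≤ ε / 3 := fun x y h =>
      le_trans (hn x y h) (by linarith)
    have hclose : ∀ μ : ProbabilityMeasure (ℕ → D),
        |(∫ x, g x ∂(μ : Measure (ℕ → D))) - discSum n g (μ : Measure (ℕ → D))| ≤ ε / 3 :=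
      fun μ => discSum_close hn' (μ : Measure (ℕ → D))
    have hmid := Metric.tendsto_nhds.mp (tendsto_discSum F n g) (ε / 6) (by linarith)
    filter_upwards [hmid] with μ hμ
    have h1 := hclose μ
    have h2 := hclose (limPM F)
    rw [Real.dist_eq] at hμ ⊢
    have : |(∫ x, g x ∂(μ : Measure (ℕ → D))) - ∫ x, g x ∂(limPM F : Measure (ℕ → D))|
        ≤ |(∫ x, g x ∂(μ : Measure (ℕ → D))) - discSum n g (μ : Measure (ℕ → D))|
          + |discSum n g (μ : Measure (ℕ → D)) - discSum n g (limPM F : Measure (ℕ → D))|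
          + |discSum n g (limPM F : Measure (ℕ → D)) - ∫ x, g x ∂(limPM F : Measure (ℕ → D))| := by
      have := abs_sub_le (∫ x, g x ∂(μ : Measure (ℕ → D)))
        (discSum n g (limPM F : Measure (ℕ → D))) (∫ x, g x ∂(limPM F : Measure (ℕ → D)))
      have h4 := abs_sub_le (∫ x, g x ∂(μ : Measure (ℕ → D)))
        (discSum n g (μ : Measure (ℕ → D))) (discSum n g (limPM F : Measure (ℕ → D)))
      linarith
    have h3 : |discSum n g (limPM F : Measure (ℕ → D))
        - ∫ x, g x ∂(limPM F : Measure (ℕ → D))| ≤ ε / 3 := by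
      rw [abs_sub_comm]; exact h2
    calc |(∫ x, g x ∂(μ : Measure (ℕ → D))) - ∫ x, g x ∂(limPM F : Measure (ℕ → D))|
        ≤ ε / 3 + ε / 6 + ε / 3 := by
          refine le_trans this ?_
          exact add_le_add (add_le_add h1 hμ.le) h3
      _ < ε := by linarith
  exact this

instance compactSpace_probabilityMeasure : CompactSpace (ProbabilityMeasure (ℕ → D)) := by
  constructor
  rw [isCompact_iff_ultrafilter_le_nhds]
  intro F _
  exact ⟨limPM F, Set.mem_univ _, ultrafilter_le_nhds_limPM F⟩



variable {D : Type*} [Fintype D] [Nonempty D] [TopologicalSpace D]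
    [DiscreteTopology D] [MeasurableSpace D] [BorelSpace D]

/-- the shift map -/
def shiftT : (ℕ → D) → (ℕ → D) := fun ω n => ω (n + 1)

lemma continuous_shiftT : Continuous (shiftT (D := D)) :=
  continuous_pi fun n => continuous_apply (n + 1)

lemma measurable_shiftT : Measurable (shiftT (D := D)) := continuous_shiftT.measurable

/-- mixture of two probability measures -/
noncomputable def mixPM (μ ν : ProbabilityMeasure (ℕ → D)) (p : ℝ≥0) (hp : p ≤ 1) :
    ProbabilityMeasure (ℕ → D) :=
  ⟨(p : ℝ≥0∞) • (μ : Measure (ℕ → D)) + (1 - (p : ℝ≥0∞)) • (ν : Measure (ℕ → D)), by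
    constructor
    simp only [Measure.coe_add, Measure.coe_smul, Pi.add_apply, Pi.smul_apply,
      measure_univ, smul_eq_mul, mul_one]
    exact add_tsub_cancel_of_le (ENNReal.coe_le_one_iff.mpr hp)⟩

lemma mixPM_coe (μ ν : ProbabilityMeasure (ℕ → D)) (p : ℝ≥0) (hp : p ≤ 1) :
    (mixPM μ ν p hp : Measure (ℕ → D))
      = (p : ℝ≥0∞) • (μ : Measure (ℕ → D)) + (1 - (p : ℝ≥0∞)) • (ν : Measure (ℕ → D)) := rfl

lemma mixPM_mem {M : Set (ProbabilityMeasure (ℕ → D))}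
    (hM : M = {μ : ProbabilityMeasure (ℕ → D) |
      (μ : Measure (ℕ → D)).map (fun ω n => ω (n + 1)) = (μ : Measure (ℕ → D))})
    {μ ν : ProbabilityMeasure (ℕ → D)} (hμ : μ ∈ M) (hν : ν ∈ M) (p : ℝ≥0) (hp : p ≤ 1) :
    mixPM μ ν p hp ∈ M := by
  rw [hM] at hμ hν ⊢
  simp only [Set.mem_setOf_eq] at hμ hν ⊢
  have hTs : (fun (ω : ℕ → D) (n : ℕ) => ω (n + 1)) = shiftT (D := D) := rfl
  rw [mixPM_coe, hTs, Measure.map_add _ _ measurable_shiftT, Measure.map_smul, Measure.map_smul,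
    ← hTs, hμ, hν]

lemma mixPM_integral (φ : (ℕ → D) → ℝ) (hφ : Continuous φ)
    (μ ν : ProbabilityMeasure (ℕ → D)) (p : ℝ≥0) (hp : p ≤ 1) :
    ∫ ω, φ ω ∂(mixPM μ ν p hp : Measure (ℕ → D))
      = (p : ℝ) * ∫ ω, φ ω ∂(μ : Measure (ℕ → D))
        + (1 - (p : ℝ)) * ∫ ω, φ ω ∂(ν : Measure (ℕ → D)) := by
  set Φ : (ℕ → D) →ᵇ ℝ := BoundedContinuousFunction.mkOfCompact ⟨φ, hφ⟩ with hΦ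
  have hφΦ : φ = ⇑Φ := rfl
  have hintμ : Integrable φ (μ : Measure (ℕ → D)) := by rw [hφΦ]; exact Φ.integrable _
  have hintν : Integrable φ (ν : Measure (ℕ → D)) := by rw [hφΦ]; exact Φ.integrable _
  have h1p : (1 : ℝ≥0∞) - (p : ℝ≥0∞) = ((1 - p : ℝ≥0) : ℝ≥0∞) := by
    rw [ENNReal.coe_sub, ENNReal.coe_one]
  rw [mixPM_coe, integral_add_measure (hintμ.smul_measure ENNReal.coe_ne_top)
    (hintν.smul_measure (by rw [h1p]; exact ENNReal.coe_ne_top)),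
    integral_smul_measure, integral_smul_measure, h1p]
  simp only [ENNReal.coe_toReal, smul_eq_mul]
  congr 1
  congr 1
  rw [NNReal.coe_sub hp, NNReal.coe_one]

lemma mixPM_Dly {M : Set (ProbabilityMeasure (ℕ → D))}
    (Dly : ProbabilityMeasure (ℕ → D) → ℝ)
    (hDaff : ∀ (μ ν κ : ProbabilityMeasure (ℕ → D)), μ ∈ M → ν ∈ M →
      ∀ ρ : ℝ≥0, ρ ≤ 1 →
      (κ : Measure (ℕ → D))
        = (ρ : ℝ≥0∞) • (μ : Measure (ℕ → D)) + (1 - (ρ : ℝ≥0∞)) • (ν : Measure (ℕ → D)) →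
      Dly κ = (ρ : ℝ) * Dly μ + (1 - (ρ : ℝ)) * Dly ν)
    {μ ν : ProbabilityMeasure (ℕ → D)} (hμ : μ ∈ M) (hν : ν ∈ M) (p : ℝ≥0) (hp : p ≤ 1) :
    Dly (mixPM μ ν p hp) = (p : ℝ) * Dly μ + (1 - (p : ℝ)) * Dly ν :=
  hDaff μ ν _ hμ hν p hp (mixPM_coe μ ν p hp)


lemma bddAbove_of_usc {X : Type*} [TopologicalSpace X] {M : Set X} (hMc : IsCompact M)
    {g : X → ℝ} (hg : UpperSemicontinuousOn g M) : BddAbove (g '' M) := by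
  rcases M.eq_empty_or_nonempty with hE | hne
  · simp [hE]
  set U : X → Set X := fun x => {z | z ∈ M → g z < g x + 1} with hU
  have hUnhds : ∀ x ∈ M, U x ∈ 𝓝 x := by
    intro x hx
    have h := hg x hx (g x + 1) (lt_add_one _)
    rw [eventually_nhdsWithin_iff] at h
    exact h
  obtain ⟨t, htM, htcov⟩ := hMc.elim_nhds_subcover U hUnhds
  have htne : t.Nonempty := by
    obtain ⟨x, hx⟩ := hne
    obtain ⟨y, hy, _⟩ := Set.mem_iUnion₂.mp (htcov hx)
    exact ⟨y, hy⟩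
  refine ⟨t.sup' htne (fun x => g x + 1), ?_⟩
  rintro _ ⟨y, hy, rfl⟩
  obtain ⟨x, hxt, hyx⟩ := Set.mem_iUnion₂.mp (htcov hy)
  exact le_trans (hyx hy).le (Finset.le_sup' (fun x => g x + 1) hxt)

lemma isClosed_M {M : Set (ProbabilityMeasure (ℕ → D))}
    (hM : M = {μ : ProbabilityMeasure (ℕ → D) |
      (μ : Measure (ℕ → D)).map (fun ω n => ω (n + 1)) = (μ : Measure (ℕ → D))}) :
    IsClosed M := by
  have hrw : M = {μ : ProbabilityMeasure (ℕ → D) |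
      ProbabilityMeasure.map μ (continuous_shiftT.measurable.aemeasurable) = μ} := by
    rw [hM]
    ext μ
    simp only [Set.mem_setOf_eq]
    constructor
    · intro h
      apply Subtype.ext
      show (μ : Measure (ℕ → D)).map shiftT = (μ : Measure (ℕ → D))
      exact h
    · intro h
      have := congrArg ProbabilityMeasure.toMeasure h
      exact this
  rw [hrw]
  exact isClosed_eq (ProbabilityMeasure.continuous_map continuous_shiftT) continuous_id

lemma M_nonempty {M : Set (ProbabilityMeasure (ℕ → D))}
    (hM : M = {μ : ProbabilityMeasure (ℕ → D) |
      (μ : Measure (ℕ → D)).map (fun ω n => ω (n + 1)) = (μ : Measure (ℕ → D))}) :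
    M.Nonempty := by
  have d₀ : D := Classical.arbitrary D
  refine ⟨⟨Measure.dirac (fun _ => d₀), inferInstance⟩, ?_⟩
  rw [hM]
  show Measure.map (fun ω n => ω (n + 1)) (Measure.dirac (fun _ => d₀)) = _
  have : (fun (ω : ℕ → D) (n : ℕ) => ω (n + 1)) = shiftT (D := D) := rfl
  rw [this, Measure.map_dirac' measurable_shiftT]
  rfl



end Part1

/-- Continuity of the conditional variational formula (Lemma 5.1 of the paper): with
`M` the set of shift-invariant Borel probability measures on the full shift, `φ`
continuous, `Dly` upper semicontinuous on `M` and affine along convex combinations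
(`Dly (ρ•μ + (1-ρ)•ν) = ρ Dly μ + (1-ρ) Dly ν`), the function
`f α = sup {Dly μ : μ ∈ M, ∫ φ dμ = α}` is lower semicontinuous, hence continuous,
on `[αmin, αmax]`. -/
theorem stmt_13 {D : Type*} [Fintype D] [Nonempty D] [TopologicalSpace D]
    [DiscreteTopology D] [MeasurableSpace D] [BorelSpace D]
    (φ : (ℕ → D) → ℝ) (hφ : Continuous φ)
    (M : Set (ProbabilityMeasure (ℕ → D)))
    (hM : M = {μ : ProbabilityMeasure (ℕ → D) |
      (μ : Measure (ℕ → D)).map (fun ω n => ω (n + 1)) = (μ : Measure (ℕ → D))})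
    (Dly : ProbabilityMeasure (ℕ → D) → ℝ)
    (hD : UpperSemicontinuousOn Dly M)
    (hDaff : ∀ (μ ν κ : ProbabilityMeasure (ℕ → D)), μ ∈ M → ν ∈ M →
      ∀ ρ : ℝ≥0, ρ ≤ 1 →
      (κ : Measure (ℕ → D))
        = (ρ : ℝ≥0∞) • (μ : Measure (ℕ → D)) + (1 - (ρ : ℝ≥0∞)) • (ν : Measure (ℕ → D)) →
      Dly κ = (ρ : ℝ) * Dly μ + (1 - (ρ : ℝ)) * Dly ν)
    (f : ℝ → ℝ)
    (hf : ∀ α : ℝ, f α = sSup (Dly ''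
      {μ : ProbabilityMeasure (ℕ → D) | μ ∈ M ∧ ∫ ω, φ ω ∂(μ : Measure (ℕ → D)) = α}))
    (αmin αmax : ℝ)
    (hαmin : αmin = sInf ((fun μ : ProbabilityMeasure (ℕ → D) =>
      ∫ ω, φ ω ∂(μ : Measure (ℕ → D))) '' M))
    (hαmax : αmax = sSup ((fun μ : ProbabilityMeasure (ℕ → D) =>
      ∫ ω, φ ω ∂(μ : Measure (ℕ → D))) '' M)) :
    LowerSemicontinuousOn f (Set.Icc αmin αmax) ∧
      ContinuousOn f (Set.Icc αmin αmax) := by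
  classical
  have hIcont : Continuous (fun μ : ProbabilityMeasure (ℕ → D) =>
      ∫ ω, φ ω ∂(μ : Measure (ℕ → D))) :=
    ProbabilityMeasure.continuous_integral_boundedContinuousFunction
      (BoundedContinuousFunction.mkOfCompact ⟨φ, hφ⟩)
  have hMcpt : IsCompact M := (isClosed_M hM).isCompact
  have hMne : M.Nonempty := M_nonempty hM
  have hAcpt : IsCompact ((fun μ : ProbabilityMeasure (ℕ → D) =>
      ∫ ω, φ ω ∂(μ : Measure (ℕ → D))) '' M) := hMcpt.image hIcont
  have hAne : ((fun μ : ProbabilityMeasure (ℕ → D) =>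
      ∫ ω, φ ω ∂(μ : Measure (ℕ → D))) '' M).Nonempty := hMne.image _
  have hmin_mem := hαmin ▸ hAcpt.sInf_mem hAne
  have hmax_mem := hαmax ▸ hAcpt.sSup_mem hAne
  obtain ⟨μmin, hμminM, hμmin0⟩ := hmin_mem
  obtain ⟨μmax, hμmaxM, hμmax0⟩ := hmax_mem
  have hμmin : (∫ ω, φ ω ∂(μmin : Measure (ℕ → D))) = αmin := hμmin0
  have hμmax : (∫ ω, φ ω ∂(μmax : Measure (ℕ → D))) = αmax := hμmax0
  have hbddM : BddAbove (Dly '' M) := bddAbove_of_usc hMcpt hD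
  have hbddFib : ∀ α : ℝ, BddAbove (Dly ''
      {μ : ProbabilityMeasure (ℕ → D) | μ ∈ M ∧ ∫ ω, φ ω ∂(μ : Measure (ℕ → D)) = α}) :=
    fun α => hbddM.mono (Set.image_mono fun μ hμ => hμ.1)
  have hle : ∀ (α : ℝ) (μ : ProbabilityMeasure (ℕ → D)), μ ∈ M →
      (∫ ω, φ ω ∂(μ : Measure (ℕ → D))) = α → Dly μ ≤ f α := by
    intro α μ hμ hIμ
    rw [hf]
    exact le_csSup (hbddFib α) ⟨μ, ⟨hμ, hIμ⟩, rfl⟩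
  have hmix : ∀ (μ ν : ProbabilityMeasure (ℕ → D)), μ ∈ M → ν ∈ M → ∀ t : ℝ, 0 ≤ t → t ≤ 1 →
      ∃ κ, κ ∈ M ∧
        (∫ ω, φ ω ∂(κ : Measure (ℕ → D)))
          = t * (∫ ω, φ ω ∂(μ : Measure (ℕ → D))) + (1 - t) * ∫ ω, φ ω ∂(ν : Measure (ℕ → D)) ∧
        Dly κ = t * Dly μ + (1 - t) * Dly ν := by
    intro μ ν hμ hν t ht0 ht1
    set p : ℝ≥0 := t.toNNReal with hp
    have hp1 : p ≤ 1 := by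
      rw [hp, ← Real.toNNReal_one]
      exact Real.toNNReal_mono ht1
    have hpt : (p : ℝ) = t := Real.coe_toNNReal t ht0
    refine ⟨mixPM μ ν p hp1, mixPM_mem hM hμ hν p hp1, ?_, ?_⟩
    · have := mixPM_integral φ hφ μ ν p hp1
      rw [hpt] at this
      exact this
    · have := mixPM_Dly Dly hDaff hμ hν p hp1
      rw [hpt] at this
      exact this
  have hfib_ne : ∀ β ∈ Set.Icc αmin αmax, ∃ μ, μ ∈ M ∧
      (∫ ω, φ ω ∂(μ : Measure (ℕ → D))) = β := by
    intro β hβ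
    rcases eq_or_lt_of_le (le_trans hβ.1 hβ.2) with heq | hlt
    · have hβeq : β = αmin := le_antisymm (heq ▸ hβ.2) hβ.1
      exact ⟨μmin, hμminM, by rw [hμmin, hβeq]⟩
    · set t : ℝ := (αmax - β) / (αmax - αmin) with ht
      have hden : 0 < αmax - αmin := sub_pos.mpr hlt
      have ht0 : 0 ≤ t := div_nonneg (sub_nonneg.mpr hβ.2) hden.le
      have ht1 : t ≤ 1 := by
        rw [ht, div_le_one hden]
        have := hβ.1
        linarith
      obtain ⟨κ, hκM, hκI, _⟩ := hmix μmin μmax hμminM hμmaxM t ht0 ht1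
      refine ⟨κ, hκM, ?_⟩
      rw [hκI, hμmin, hμmax, ht]
      field_simp
      ring
  have husc : UpperSemicontinuousOn f (Set.Icc αmin αmax) := by
    intro α hα y hy
    obtain ⟨c, hc1, hc2⟩ := exists_between hy
    set S := {μ : ProbabilityMeasure (ℕ → D) | μ ∈ M ∧ c ≤ Dly μ} with hSdef
    have hSsub : S ⊆ M := fun μ hμ => hμ.1
    have hSclosed : IsClosed S := by
      rw [← closure_subset_iff_isClosed]
      intro x hx
      have hxM : x ∈ M := (isClosed_M hM).closure_subset ((closure_mono hSsub) hx)
      by_contra hxS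
      have hDx : Dly x < c := by
        rcases lt_or_ge (Dly x) c with h | h
        · exact h
        · exact absurd ⟨hxM, h⟩ hxS
      have hev : ∀ᶠ z in 𝓝[M] x, Dly z < c := hD x hxM c hDx
      haveI hne : (𝓝[S] x).NeBot := mem_closure_iff_nhdsWithin_neBot.mp hx
      have hev' : ∀ᶠ z in 𝓝[S] x, Dly z < c := hev.filter_mono (nhdsWithin_mono x hSsub)
      have hev2 : ∀ᶠ z in 𝓝[S] x, z ∈ S := eventually_mem_nhdsWithin
      obtain ⟨z, hz1, hz2⟩ := (hev'.and hev2).exists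
      exact absurd hz2.2 (not_le.mpr hz1)
    have hScpt : IsCompact S := hSclosed.isCompact
    have hIS : IsClosed ((fun μ : ProbabilityMeasure (ℕ → D) =>
        ∫ ω, φ ω ∂(μ : Measure (ℕ → D))) '' S) := (hScpt.image hIcont).isClosed
    have hαnot : α ∉ (fun μ : ProbabilityMeasure (ℕ → D) =>
        ∫ ω, φ ω ∂(μ : Measure (ℕ → D))) '' S := by
      rintro ⟨μ, ⟨hμM, hcle⟩, hIμ⟩
      have : Dly μ ≤ f α := hle α μ hμM hIμ
      linarith
    have hopenEv : ∀ᶠ β in 𝓝 α, β ∉ (fun μ : ProbabilityMeasure (ℕ → D) =>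
        ∫ ω, φ ω ∂(μ : Measure (ℕ → D))) '' S :=
      hIS.isOpen_compl.mem_nhds hαnot
    filter_upwards [hopenEv.filter_mono nhdsWithin_le_nhds, eventually_mem_nhdsWithin]
      with β hβnot hβIcc
    have hfibβ := hfib_ne β hβIcc
    have hbound : ∀ x ∈ Dly ''
        {μ : ProbabilityMeasure (ℕ → D) | μ ∈ M ∧ ∫ ω, φ ω ∂(μ : Measure (ℕ → D)) = β},
        x ≤ c := by
      rintro _ ⟨μ, ⟨hμM, hIμ⟩, rfl⟩
      by_contra hgt
      exact hβnot ⟨μ, ⟨hμM, (not_le.mp hgt).le⟩, hIμ⟩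
    have hfβ : f β ≤ c := by
      rw [hf]
      obtain ⟨μ, hμ⟩ := hfibβ
      exact csSup_le ⟨Dly μ, ⟨μ, hμ, rfl⟩⟩ hbound
    linarith
  have hlsc : LowerSemicontinuousOn f (Set.Icc αmin αmax) := by
    intro α hα y hy
    have hy' : y < sSup (Dly ''
        {μ : ProbabilityMeasure (ℕ → D) | μ ∈ M ∧ ∫ ω, φ ω ∂(μ : Measure (ℕ → D)) = α}) := by
      rw [hf] at hy; exact hy
    obtain ⟨μα, hμα⟩ := hfib_ne α hα
    have hsne : (Dly ''
        {μ : ProbabilityMeasure (ℕ → D) | μ ∈ M ∧ ∫ ω, φ ω ∂(μ : Measure (ℕ → D)) = α}).Nonempty :=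
      ⟨Dly μα, ⟨μα, hμα, rfl⟩⟩
    obtain ⟨_, ⟨μ₀, hμ₀, rfl⟩, hyμ₀⟩ := exists_lt_of_lt_csSup hsne hy'
    obtain ⟨hμ₀M, hμ₀I⟩ := hμ₀
    set ε := Dly μ₀ - y with hεdef
    have hε : 0 < ε := sub_pos.mpr hyμ₀
    set C := |Dly μmax - Dly μ₀| + |Dly μmin - Dly μ₀| + 1 with hCdef
    have hC : 0 < C := by positivity
    set δp := if αmax - α = 0 then (1:ℝ) else ε * (αmax - α) / C with hδpdef
    set δm := if α - αmin = 0 then (1:ℝ) else ε * (α - αmin) / C with hδmdef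
    have hδp0 : 0 < δp := by
      rw [hδpdef]; split_ifs with h
      · norm_num
      · have : 0 < αmax - α := lt_of_le_of_ne (sub_nonneg.mpr hα.2) (Ne.symm h)
        positivity
    have hδm0 : 0 < δm := by
      rw [hδmdef]; split_ifs with h
      · norm_num
      · have : 0 < α - αmin := lt_of_le_of_ne (sub_nonneg.mpr hα.1) (Ne.symm h)
        positivity
    set δ := min δp δm with hδdef
    have hδ0 : 0 < δ := lt_min hδp0 hδm0
    filter_upwards [nhdsWithin_le_nhds (Metric.ball_mem_nhds α hδ0), eventually_mem_nhdsWithin]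
      with β hβball hβIcc
    have hβd : |β - α| < δ := by
      rw [Metric.mem_ball, Real.dist_eq] at hβball
      exact hβball
    show y < f β
    rcases le_or_gt α β with hcase | hcase
    · by_cases hmax0 : αmax - α = 0
      · have hβα : β = α := le_antisymm (by have := hβIcc.2; linarith) hcase
        rw [hβα]; exact hy
      · have hd : 0 < αmax - α := lt_of_le_of_ne (sub_nonneg.mpr hα.2) (Ne.symm hmax0)
        set t := (αmax - β) / (αmax - α) with htdef
        have ht0 : 0 ≤ t := div_nonneg (sub_nonneg.mpr hβIcc.2) hd.le
        have ht1 : t ≤ 1 := by rw [htdef, div_le_one hd]; linarith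
        obtain ⟨κ, hκM, hκI, hκD⟩ := hmix μ₀ μmax hμ₀M hμmaxM t ht0 ht1
        have hκint : (∫ ω, φ ω ∂(κ : Measure (ℕ → D))) = β := by
          rw [hκI, hμ₀I, hμmax, htdef]
          field_simp
          ring
        have h1t : 1 - t = (β - α)/(αmax - α) := by
          rw [htdef]
          field_simp
          ring
        have hδle : δ ≤ ε * (αmax - α) / C :=
          le_trans (min_le_left _ _) (le_of_eq (if_neg hmax0))
        have hsmall : (1 - t) * C < ε := by
          have h5 : β - α < ε * (αmax - α) / C :=
            lt_of_le_of_lt (le_abs_self _) (lt_of_lt_of_le hβd hδle)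
          have h6 : (β - α) * C < ε * (αmax - α) := (lt_div_iff₀ hC).mp h5
          rw [h1t, div_mul_eq_mul_div, div_lt_iff₀ hd]
          linarith
        have hXle : |Dly μmax - Dly μ₀| ≤ C := by
          rw [hCdef]
          have := abs_nonneg (Dly μmin - Dly μ₀)
          linarith
        have hDκ : y < Dly κ := by
          rw [hκD]
          have h7 : -(|Dly μmax - Dly μ₀|) ≤ Dly μmax - Dly μ₀ := neg_abs_le _
          have h8 : (1 - t) * |Dly μmax - Dly μ₀| ≤ (1 - t) * C :=
            mul_le_mul_of_nonneg_left hXle (by linarith)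
          nlinarith [sub_nonneg.mpr ht1]
        exact lt_of_lt_of_le hDκ (hle β κ hκM hκint)
    · have hd : 0 < α - αmin := by have := hβIcc.1; linarith
      have hmin0 : ¬ (α - αmin = 0) := hd.ne'
      set t := (β - αmin) / (α - αmin) with htdef
      have ht0 : 0 ≤ t := div_nonneg (sub_nonneg.mpr hβIcc.1) hd.le
      have ht1 : t ≤ 1 := by rw [htdef, div_le_one hd]; linarith
      obtain ⟨κ, hκM, hκI, hκD⟩ := hmix μ₀ μmin hμ₀M hμminM t ht0 ht1
      have hκint : (∫ ω, φ ω ∂(κ : Measure (ℕ → D))) = β := by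
        rw [hκI, hμ₀I, hμmin, htdef]
        field_simp
        ring
      have h1t : 1 - t = (α - β)/(α - αmin) := by
        rw [htdef]
        field_simp
        ring
      have hδle : δ ≤ ε * (α - αmin) / C :=
        le_trans (min_le_right _ _) (le_of_eq (if_neg hmin0))
      have hsmall : (1 - t) * C < ε := by
        have h5 : α - β < ε * (α - αmin) / C := by
          have : α - β ≤ |β - α| := by rw [abs_sub_comm]; exact le_abs_self _
          exact lt_of_le_of_lt this (lt_of_lt_of_le hβd hδle)
        have h6 : (α - β) * C < ε * (α - αmin) := (lt_div_iff₀ hC).mp h5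
        rw [h1t, div_mul_eq_mul_div, div_lt_iff₀ hd]
        linarith
      have hXle : |Dly μmin - Dly μ₀| ≤ C := by
        rw [hCdef]
        have := abs_nonneg (Dly μmax - Dly μ₀)
        linarith
      have hDκ : y < Dly κ := by
        rw [hκD]
        have h7 : -(|Dly μmin - Dly μ₀|) ≤ Dly μmin - Dly μ₀ := neg_abs_le _
        have h8 : (1 - t) * |Dly μmin - Dly μ₀| ≤ (1 - t) * C :=
          mul_le_mul_of_nonneg_left hXle (by linarith)
        nlinarith [sub_nonneg.mpr ht1]
      exact lt_of_lt_of_le hDκ (hle β κ hκM hκint)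
  refine ⟨hlsc, ?_⟩
  intro α hα
  have h1 := husc α hα
  have h2 := hlsc α hα
  show Tendsto f (𝓝[Set.Icc αmin αmax] α) (𝓝 (f α))
  rw [Metric.tendsto_nhds]
  intro ε hε
  have hu := h1 (f α + ε) (by linarith)
  have hl := h2 (f α - ε) (by linarith)
  filter_upwards [hu, hl] with β hβu hβl
  rw [Real.dist_eq, abs_lt]
  constructor <;> linarith
end

section
/- Let $(\gamma_q)_{q\ge 0}$ be a sequence of natural numbers with $\gamma_0=0$ and, for $q>1$, $\gamma_q = q\,\gamma_{q-1}\,M_q+\gamma_{q-1}$ where $M_q\ge 1$ are natural numbers. Let $(x_n)$ be a bounded real sequence, $\alpha\in\mathbb{R}$, and suppose that whenever $\gamma_{q-1}\le m < n$ with $n-m\ge N(q)$ and the block $(x_m,\dots,x_{n-1})$ lies in block $q$'s range, $\left|\sum_{l=m}^{n-1}x_l-(n-m)\alpha\right| < \frac{n}{q}+E_n$ where $E_n/n\to 0$. If additionally $\gamma_{q-1}\le\gamma_q/q$ and $N(q+1)\le\gamma_q/q$ for all $q$, then $\lim_{n\to\infty}\frac{1}{n}\sum_{l=0}^{n-1}x_l=\alpha$.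 -/
open Filter Topology Finset

set_option maxHeartbeats 1000000 in
/-- Abstract block-decomposition lemma (cf. Lemma 3.3 of the paper): let `γ 0 = 0`,
`γ 1 = 1` and `γ q = q * γ (q-1) * M q + γ (q-1)` for `q > 1` (with `M q ≥ 1`), let
`(x n)` be a bounded real sequence, and suppose that for every `q ≥ 1` and every
`γ (q-1) ≤ m < n ≤ γ q` with `n - m ≥ N q` one has
`|∑_{l=m}^{n-1} x l - (n-m) α| < n/q + E n`, where `E n / n → 0`. If moreover
`q * γ (q-1) ≤ γ q` and `q * N (q+1) ≤ γ q` for all `q ≥ 1`, then the Birkhoff averages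
`(1/n) ∑_{l<n} x l` converge to `α`. -/
theorem stmt_19 (γ N M : ℕ → ℕ)
    (hM : ∀ q, 1 ≤ M q)
    (hγ0 : γ 0 = 0) (hγ1 : γ 1 = 1)
    (hγrec : ∀ q, 1 < q → γ q = q * γ (q - 1) * M q + γ (q - 1))
    (x : ℕ → ℝ) (C : ℝ) (hC : ∀ n, |x n| ≤ C)
    (α : ℝ) (E : ℕ → ℝ)
    (hE : Tendsto (fun n => E n / n) atTop (𝓝 0))
    (hblock : ∀ q m n : ℕ, 1 ≤ q → γ (q - 1) ≤ m → m < n → n ≤ γ q →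
      N q ≤ n - m →
      |(∑ l ∈ Finset.Ico m n, x l) - ((n : ℝ) - m) * α| < (n : ℝ) / q + E n)
    (hγdiv : ∀ q, 1 ≤ q → q * γ (q - 1) ≤ γ q)
    (hN : ∀ q, 1 ≤ q → q * N (q + 1) ≤ γ q) :
    Tendsto (fun n : ℕ => (∑ l ∈ Finset.range n, x l) / n) atTop (𝓝 α) := by
  have hC0 : 0 ≤ C := (abs_nonneg _).trans (hC 0)
  set K : ℝ := C + |α| with hK
  have hK0 : 0 ≤ K := by positivity
  -- positivity of γ
  have hpos : ∀ q, 1 ≤ q → 1 ≤ γ q := by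
    intro q hq
    induction q with
    | zero => omega
    | succ p ih =>
      rcases Nat.lt_or_ge 1 (p + 1) with h | h
      · rw [hγrec _ h]
        have h1 := ih (by omega)
        simp only [Nat.add_sub_cancel]
        omega
      · have hp : p + 1 = 1 := by omega
        rw [hp, hγ1]
  have hγge : ∀ q, q ≤ γ q := by
    intro q
    rcases Nat.lt_or_ge q 2 with h | h
    · interval_cases q <;> simp [hγ0, hγ1]
    · rw [hγrec q (by omega)]
      have h1 := hpos (q - 1) (by omega)
      have h2 := hM q
      have : q * 1 * 1 ≤ q * γ (q - 1) * M q :=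
        Nat.mul_le_mul (Nat.mul_le_mul_left _ h1) h2
      omega
  -- crude bound on any block
  have crude : ∀ a b : ℕ, a ≤ b →
      |(∑ l ∈ Finset.Ico a b, x l) - ((b : ℝ) - a) * α| ≤ ((b : ℝ) - a) * K := by
    intro a b hab
    have hba : (0 : ℝ) ≤ (b : ℝ) - a := by
      have : (a : ℝ) ≤ b := by exact_mod_cast hab
      linarith
    have h1 : |∑ l ∈ Finset.Ico a b, x l| ≤ ((b : ℝ) - a) * C := by
      calc |∑ l ∈ Finset.Ico a b, x l| ≤ ∑ l ∈ Finset.Ico a b, |x l| :=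
            Finset.abs_sum_le_sum_abs _ _
        _ ≤ ∑ _l ∈ Finset.Ico a b, C := Finset.sum_le_sum fun i _ => hC i
        _ = ((b - a : ℕ) : ℝ) * C := by
            rw [Finset.sum_const, Nat.card_Ico, nsmul_eq_mul]
        _ = ((b : ℝ) - a) * C := by rw [Nat.cast_sub hab]
    have h2 : |((b : ℝ) - a) * α| = ((b : ℝ) - a) * |α| := by
      rw [abs_mul, abs_of_nonneg hba]
    have h3 : |(∑ l ∈ Finset.Ico a b, x l) - ((b : ℝ) - a) * α|
        ≤ |∑ l ∈ Finset.Ico a b, x l| + |((b : ℝ) - a) * α| := abs_sub _ _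
    have h4 : ((b : ℝ) - a) * K = ((b : ℝ) - a) * C + ((b : ℝ) - a) * |α| := by
      rw [hK]; ring
    linarith
  -- the block index
  classical
  set Q : ℕ → ℕ := fun n => Nat.findGreatest (fun q => γ q ≤ n) n with hQdef
  have hQ1 : ∀ n, 1 ≤ n → 1 ≤ Q n := by
    intro n hn
    exact Nat.le_findGreatest hn (by simpa [hγ1] using hn)
  have hQle : ∀ n, 1 ≤ n → γ (Q n) ≤ n := by
    intro n hn
    exact Nat.findGreatest_spec (P := fun q => γ q ≤ n) hn (by simpa [hγ1] using hn)
  have hQlt : ∀ n, n < γ (Q n + 1) := by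
    intro n
    by_contra hcon
    push_neg at hcon
    have h1 : Q n + 1 ≤ n := le_trans (hγge _) hcon
    have h2 : ¬ γ (Q n + 1) ≤ n :=
      Nat.findGreatest_is_greatest (P := fun q => γ q ≤ n) (k := Q n + 1)
        (Nat.lt_succ_self _) h1
    exact h2 hcon
  have hQtop : Tendsto Q atTop atTop := by
    rw [tendsto_atTop_atTop]
    intro b
    refine ⟨max b (γ b), fun n hn => ?_⟩
    exact Nat.le_findGreatest (le_trans (le_max_left _ _) hn)
      (le_trans (le_max_right _ _) hn)
  have hγQtop : Tendsto (fun n => γ (Q n)) atTop atTop :=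
    tendsto_atTop_mono (fun n => hγge (Q n)) hQtop
  rw [Metric.tendsto_atTop]
  intro ε hε
  -- choose Q₀
  obtain ⟨Q₀', hQ₀'⟩ := exists_nat_gt ((4 * K + 4) / ε)
  set Q₀ : ℕ := max Q₀' 2 with hQ₀def
  have hQ₀2 : 2 ≤ Q₀ := le_max_right _ _
  have hQ₀pos : (0 : ℝ) < Q₀ := by
    have : (0:ℕ) < Q₀ := by omega
    exact_mod_cast this
  have hQ₀ : (2 * K + 2) / Q₀ < ε / 2 := by
    rw [div_lt_iff₀ hQ₀pos]
    have h1 : (4 * K + 4) / ε < Q₀' := hQ₀'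
    have h2 : (Q₀' : ℝ) ≤ Q₀ := by exact_mod_cast le_max_left Q₀' 2
    have h3 : (4 * K + 4) < ε * Q₀ := by
      rw [div_lt_iff₀ hε] at h1
      calc (4 * K + 4) < Q₀' * ε := h1
        _ ≤ Q₀ * ε := by nlinarith
        _ = ε * Q₀ := by ring
    nlinarith
  -- choose N₁ controlling E
  obtain ⟨N₀, hN₀⟩ := Metric.tendsto_atTop.1 hE (ε / 8) (by positivity)
  set N₁ : ℕ := max N₀ 1 with hN₁def
  have hEbd : ∀ m : ℕ, N₁ ≤ m → |E m| ≤ ε / 8 * m := by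
    intro m hm
    have hm1 : 1 ≤ m := le_trans (le_max_right _ _) hm
    have hmpos : (0 : ℝ) < m := by exact_mod_cast hm1
    have := hN₀ m (le_trans (le_max_left _ _) hm)
    rw [Real.dist_eq, sub_zero, abs_div, abs_of_pos hmpos] at this
    rw [div_lt_iff₀ hmpos] at this
    nlinarith
  -- choose n₀
  have hev : ∀ᶠ n : ℕ in atTop, Q₀ ≤ Q n ∧ N₁ ≤ γ (Q n) ∧ N₁ ≤ n ∧ 1 ≤ n := by
    filter_upwards [hQtop.eventually_ge_atTop Q₀, hγQtop.eventually_ge_atTop N₁,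
      eventually_ge_atTop N₁, eventually_ge_atTop 1] with n h1 h2 h3 h4
    exact ⟨h1, h2, h3, h4⟩
  obtain ⟨n₀, hn₀⟩ := eventually_atTop.1 hev
  refine ⟨n₀, fun n hn => ?_⟩
  obtain ⟨hq₀, hγN₁, hnN₁, hn1⟩ := hn₀ n hn
  set q : ℕ := Q n with hqdef
  have hq2 : 2 ≤ q := le_trans hQ₀2 hq₀
  have hq1 : 1 ≤ q := by omega
  set a : ℕ := γ (q - 1) with hadef
  set b : ℕ := γ q with hbdef
  have hbn : b ≤ n := hQle n hn1
  have hnlt : n < γ (q + 1) := hQlt n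
  have hqa : q * a ≤ b := hγdiv q hq1
  have ha1 : 1 ≤ a := hpos (q - 1) (by omega)
  have hb2 : b = q * a * M q + a := by
    have h := hγrec q (by omega)
    rw [← hadef, ← hbdef] at h
    exact h
  have hqaM : 2 * a * 1 ≤ q * a * M q :=
    Nat.mul_le_mul (Nat.mul_le_mul hq2 le_rfl) (hM q)
  have hab : a < b := by omega
  have hNq : N q ≤ b - a := by
    have h1 := hN (q - 1) (by omega)
    have h2 : q - 1 + 1 = q := by omega
    rw [h2] at h1
    have h3 : 1 * N q ≤ (q - 1) * N q := Nat.mul_le_mul_right _ (by omega)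
    omega
  -- positivity of casts
  have hnpos : (0 : ℝ) < n := by exact_mod_cast hn1
  have hqpos : (0 : ℝ) < q := by
    have : (0:ℕ) < q := hq1
    exact_mod_cast this
  have haR : (a : ℝ) ≤ (n : ℝ) / q := by
    rw [le_div_iff₀ hqpos]
    have : (q * a : ℕ) ≤ n := le_trans hqa hbn
    calc (a : ℝ) * q = ((q * a : ℕ) : ℝ) := by push_cast; ring
      _ ≤ n := by exact_mod_cast this
  -- T1
  have hT1 : |(∑ l ∈ Finset.Ico 0 a, x l) - ((a : ℝ) - 0) * α| ≤ K * ((n : ℝ) / q) := by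
    have := crude 0 a (Nat.zero_le _)
    have h2 : ((a : ℝ) - 0) * K ≤ (n / q) * K := by
      apply mul_le_mul_of_nonneg_right _ hK0
      simpa using haR
    calc |(∑ l ∈ Finset.Ico 0 a, x l) - ((a : ℝ) - 0) * α| ≤ ((a : ℝ) - 0) * K := by
          simpa using this
      _ ≤ (n / q) * K := h2
      _ = K * ((n : ℝ) / q) := by ring
  -- T2
  have hT2 : |(∑ l ∈ Finset.Ico a b, x l) - ((b : ℝ) - a) * α|
      ≤ (n : ℝ) / q + ε / 8 * n := by
    have h := hblock q a b hq1 le_rfl hab le_rfl hNq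
    have hbnR : (b : ℝ) ≤ n := by exact_mod_cast hbn
    have h1 : (b : ℝ) / q ≤ (n : ℝ) / q := by gcongr
    have h2 : E b ≤ ε / 8 * b := le_trans (le_abs_self _) (hEbd b hγN₁)
    have h3 : ε / 8 * (b : ℝ) ≤ ε / 8 * n := by
      apply mul_le_mul_of_nonneg_left hbnR (by positivity)
    linarith
  -- T3
  have hT3 : |(∑ l ∈ Finset.Ico b n, x l) - ((n : ℝ) - b) * α|
      ≤ (K + 1) * ((n : ℝ) / q) + ε / 8 * n := by
    have hnq0 : 0 ≤ (n : ℝ) / q := by positivity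
    rcases eq_or_lt_of_le hbn with heq | hlt
    · rw [heq]
      simp only [Finset.Ico_self, Finset.sum_empty, sub_self, mul_zero]
      have : |(0 : ℝ) - 0 * α| = 0 := by simp
      rw [this]
      positivity
    · rcases Nat.lt_or_ge (n - b) (N (q + 1)) with hshort | hlong
      · -- short tail, crude bound
        have h := crude b n (le_of_lt hlt)
        have hNqb : (N (q + 1) : ℝ) ≤ (n : ℝ) / q := by
          rw [le_div_iff₀ hqpos]
          have h1 : q * N (q + 1) ≤ n := le_trans (hN q hq1) hbn
          calc (N (q + 1) : ℝ) * q = ((q * N (q + 1) : ℕ) : ℝ) := by push_cast; ring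
            _ ≤ n := by exact_mod_cast h1
        have hlen : ((n : ℝ) - b) ≤ (n : ℝ) / q := by
          have : ((n - b : ℕ) : ℝ) ≤ N (q + 1) := by
            exact_mod_cast le_of_lt hshort
          have h2 : ((n : ℝ) - b) = ((n - b : ℕ) : ℝ) := by
            rw [Nat.cast_sub (le_of_lt hlt)]
          linarith
        have h3 : ((n : ℝ) - b) * K ≤ ((n : ℝ) / q) * K :=
          mul_le_mul_of_nonneg_right hlen hK0
        have h4 : (0 : ℝ) ≤ ε / 8 * n := by positivity
        have h5 : (K + 1) * ((n : ℝ) / q) = ((n : ℝ) / q) * K + (n : ℝ) / q := by ring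
        calc |(∑ l ∈ Finset.Ico b n, x l) - ((n : ℝ) - b) * α| ≤ ((n : ℝ) - b) * K := h
          _ ≤ ((n : ℝ) / q) * K := h3
          _ ≤ (K + 1) * ((n : ℝ) / q) + ε / 8 * n := by linarith
      · -- long tail, use hblock with q+1
        have hb' : γ (q + 1 - 1) ≤ b := by simp [hbdef]
        have h := hblock (q + 1) b n (by omega) hb' hlt (le_of_lt hnlt) hlong
        have h1 : (n : ℝ) / (q + 1) ≤ (n : ℝ) / q := by
          apply div_le_div_of_nonneg_left (le_of_lt hnpos) hqpos
          push_cast; linarith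
        have h2 : E n ≤ ε / 8 * n := le_trans (le_abs_self _) (hEbd n hnN₁)
        have h3 : ((q : ℝ) + 1) = ((q + 1 : ℕ) : ℝ) := by push_cast; ring
        rw [← h3] at h
        have h4 : 0 ≤ K * ((n : ℝ) / q) := mul_nonneg hK0 hnq0
        have h5 : (K + 1) * ((n : ℝ) / q) = K * ((n : ℝ) / q) + (n : ℝ) / q := by ring
        linarith
  -- combine
  have hsplit : (∑ l ∈ Finset.range n, x l) =
      (∑ l ∈ Finset.Ico 0 a, x l) + (∑ l ∈ Finset.Ico a b, x l)
        + (∑ l ∈ Finset.Ico b n, x l) := by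
    rw [Finset.range_eq_Ico, ← Finset.sum_Ico_consecutive x (Nat.zero_le b) hbn,
      ← Finset.sum_Ico_consecutive x (Nat.zero_le a) (le_of_lt hab)]
  have hαsplit : (n : ℝ) * α =
      ((a : ℝ) - 0) * α + ((b : ℝ) - a) * α + ((n : ℝ) - b) * α := by ring
  have tri : ∀ s1 s2 s3 a1 a2 a3 : ℝ,
      |s1 + s2 + s3 - (a1 + a2 + a3)| ≤ |s1 - a1| + |s2 - a2| + |s3 - a3| := by
    intro s1 s2 s3 a1 a2 a3
    have h1 := abs_add_le (s1 - a1) (s2 - a2)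
    have h2 := abs_add_le (s1 - a1 + (s2 - a2)) (s3 - a3)
    have he : s1 + s2 + s3 - (a1 + a2 + a3) = s1 - a1 + (s2 - a2) + (s3 - a3) := by
      ring
    rw [he]
    linarith
  have hmain : |(∑ l ∈ Finset.range n, x l) - (n : ℝ) * α|
      ≤ (2 * K + 2) * ((n : ℝ) / q) + ε / 4 * n := by
    have htri := tri (∑ l ∈ Finset.Ico 0 a, x l) (∑ l ∈ Finset.Ico a b, x l)
      (∑ l ∈ Finset.Ico b n, x l) (((a : ℝ) - 0) * α) (((b : ℝ) - a) * α)
      (((n : ℝ) - b) * α)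
    rw [hsplit, hαsplit]
    have hid : K * ((n : ℝ) / q) + ((n : ℝ) / q + ε / 8 * n)
        + ((K + 1) * ((n : ℝ) / q) + ε / 8 * n)
        = (2 * K + 2) * ((n : ℝ) / q) + ε / 4 * n := by ring
    linarith
  -- finish
  have hqQ₀ : (n : ℝ) / q ≤ (n : ℝ) / Q₀ := by
    apply div_le_div_of_nonneg_left (le_of_lt hnpos) hQ₀pos
    exact_mod_cast hq₀
  have hfin : |(∑ l ∈ Finset.range n, x l) - (n : ℝ) * α| < ε * n := by
    have h1 : (2 * K + 2) * ((n : ℝ) / q) ≤ (2 * K + 2) * ((n : ℝ) / Q₀) :=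
      mul_le_mul_of_nonneg_left hqQ₀ (by positivity)
    have h2 : (2 * K + 2) * ((n : ℝ) / Q₀) = ((2 * K + 2) / Q₀) * n := by ring
    have h3 : ((2 * K + 2) / Q₀) * n < (ε / 2) * n :=
      mul_lt_mul_of_pos_right hQ₀ hnpos
    nlinarith
  rw [Real.dist_eq]
  have : (∑ l ∈ Finset.range n, x l) / n - α
      = ((∑ l ∈ Finset.range n, x l) - (n : ℝ) * α) / n := by
    field_simp
  rw [this, abs_div, abs_of_pos hnpos, div_lt_iff₀ hnpos]
  exact hfin
end
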